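/- Let n be a positive integer, t ≥ 1 a real number, and 0 < λ ≤ 1. Let K be an n×n real symmetric positive semidefinite matrix whose eigenvalues satisfy λᵢ ≤ n i^{-2t} for all i = 1, …, n (polynomial decay). Then Tr[K (K + nλI)⁻¹] ≤ (1 + 1/(2t − 1)) λ^{-1/(2t)} + 1. -/

import Mathlib

open Matrix

lemma aux_trace {n : ℕ} {K : Matrix (Fin n) (Fin n) ℝ} (hK : K.PosSemidef) {c : ℝ} (hc : 0 < c) :
    Matrix.trace (K * (K + c • (1 : Matrix (Fin n) (Fin n) ℝ))⁻¹)
      = ∑ i, hK.1.eigenvalues i * (hK.1.eigenvalues i + c)⁻¹ := by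
  set μ := hK.1.eigenvalues with hμ
  set U : Matrix (Fin n) (Fin n) ℝ := ↑(hK.1.eigenvectorUnitary) with hUdef
  have hU1 : star U * U = 1 := (Unitary.mem_iff.mp (hK.1.eigenvectorUnitary).2).1
  have hU2 : U * star U = 1 := (Unitary.mem_iff.mp (hK.1.eigenvectorUnitary).2).2
  have key : ∀ A B : Matrix (Fin n) (Fin n) ℝ,
      (U * A * star U) * (U * B * star U) = U * (A * B) * star U := by
    intro A B
    simp only [mul_assoc]
    rw [← mul_assoc (star U) U, hU1, one_mul]
  have hpos : ∀ i, 0 < μ i + c := fun i => add_pos_of_nonneg_of_pos (hK.eigenvalues_nonneg i) hc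
  have hspec : K = U * diagonal μ * star U := by
    have := hK.1.spectral_theorem
    rwa [RCLike.ofReal_real_eq_id, Function.id_comp] at this
  have hone : c • (1 : Matrix (Fin n) (Fin n) ℝ) = U * diagonal (fun _ : Fin n => c) * star U := by
    have h1 : diagonal (fun _ : Fin n => c) = c • (1 : Matrix (Fin n) (Fin n) ℝ) := by
      ext i j
      by_cases h : i = j <;> simp [Matrix.one_apply, Matrix.diagonal_apply, h]
    rw [h1, Matrix.mul_smul, Matrix.smul_mul, mul_one, hU2]
  have hKc : K + c • 1 = U * diagonal (fun i => μ i + c) * star U := by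
    rw [hspec, hone, ← add_mul, ← mul_add, ← Matrix.diagonal_add]
  have hinv : (K + c • 1)⁻¹ = U * diagonal (fun i => (μ i + c)⁻¹) * star U := by
    apply Matrix.inv_eq_right_inv
    rw [hKc, key, Matrix.diagonal_mul_diagonal]
    have : (fun i => (μ i + c) * (μ i + c)⁻¹) = fun _ : Fin n => (1 : ℝ) := by
      funext i; exact mul_inv_cancel₀ (hpos i).ne'
    rw [this, Matrix.diagonal_one, mul_one, hU2]
  rw [hinv, hspec, key, Matrix.diagonal_mul_diagonal, Matrix.trace_mul_cycle,
    hU1, one_mul, Matrix.trace_diagonal]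

lemma aux_sum (n : ℕ) (t lam : ℝ) (ht : 1 ≤ t) (hlam0 : 0 < lam) (hlam1 : lam ≤ 1) :
    ∑ i ∈ Finset.range n, min 1 (((i : ℝ) + 1) ^ (-(2 * t)) / lam)
      ≤ (1 + 1 / (2 * t - 1)) * lam ^ (-(1 / (2 * t))) + 1 := by
  have ht0 : (0 : ℝ) < t := lt_of_lt_of_le one_pos ht
  have h2t : (0 : ℝ) < 2 * t - 1 := by linarith
  set m : ℝ := lam ^ (-(1 / (2 * t))) with hm
  have hm0 : 0 < m := Real.rpow_pos_of_pos hlam0 _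
  have hexp : -(1 / (2 * t)) ≤ 0 := by
    have : (0:ℝ) ≤ 1 / (2 * t) := by positivity
    linarith
  have hm1 : 1 ≤ m := Real.one_le_rpow_of_pos_of_le_one_of_nonpos hlam0 hlam1 hexp
  set N : ℕ := ⌊m⌋₊ + 1 with hN
  have hmN : m ≤ (N : ℝ) := by
    rw [hN]
    push_cast
    exact (Nat.lt_floor_add_one m).le
  have hNm : (N : ℝ) ≤ m + 1 := by
    rw [hN]
    push_cast
    have := Nat.floor_le hm0.le
    linarith
  have hterm_le_one : ∀ i : ℕ, min 1 (((i : ℝ) + 1) ^ (-(2 * t)) / lam) ≤ 1 :=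
    fun i => min_le_left _ _
  have hms : m ^ (1 - 2 * t) = lam * m := by
    rw [hm, ← Real.rpow_mul hlam0.le]
    have : (-(1 / (2 * t))) * (1 - 2 * t) = 1 + (-(1 / (2 * t))) := by
      field_simp
      ring
    rw [this, Real.rpow_add hlam0, Real.rpow_one]
  have hfinal : (1 + 1 / (2 * t - 1)) * m + 1 = m + 1 + m / (2 * t - 1) := by
    field_simp
    ring
  rcases le_total n N with hn | hn
  · calc ∑ i ∈ Finset.range n, min 1 (((i : ℝ) + 1) ^ (-(2 * t)) / lam)
        ≤ ∑ _i ∈ Finset.range n, (1 : ℝ) := Finset.sum_le_sum fun i _ => hterm_le_one i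
      _ = (n : ℝ) := by simp
      _ ≤ (N : ℝ) := by exact_mod_cast hn
      _ ≤ m + 1 := hNm
      _ ≤ (1 + 1 / (2 * t - 1)) * m + 1 := by
          rw [hfinal]
          have : 0 ≤ m / (2 * t - 1) := by positivity
          linarith
  · have h0N : (0 : ℝ) < (N : ℝ) := by positivity
    have h0n : (0 : ℝ) < (n : ℝ) := lt_of_lt_of_le h0N (by exact_mod_cast hn)
    have hsplit : ∑ i ∈ Finset.range n, min 1 (((i : ℝ) + 1) ^ (-(2 * t)) / lam)
        = ∑ i ∈ Finset.range N, min 1 (((i : ℝ) + 1) ^ (-(2 * t)) / lam)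
          + ∑ i ∈ Finset.Ico N n, min 1 (((i : ℝ) + 1) ^ (-(2 * t)) / lam) := by
      rw [Finset.range_eq_Ico, Finset.range_eq_Ico, Finset.sum_Ico_consecutive _ (Nat.zero_le N) hn]
    have hfirst : ∑ i ∈ Finset.range N, min 1 (((i : ℝ) + 1) ^ (-(2 * t)) / lam) ≤ (N : ℝ) := by
      calc ∑ i ∈ Finset.range N, min 1 (((i : ℝ) + 1) ^ (-(2 * t)) / lam)
          ≤ ∑ _i ∈ Finset.range N, (1 : ℝ) := Finset.sum_le_sum fun i _ => hterm_le_one i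
        _ = (N : ℝ) := by simp
    have hanti : AntitoneOn (fun x : ℝ => x ^ (-(2 * t))) (Set.Icc (N : ℝ) (n : ℝ)) := by
      intro x hx y hy hxy
      exact Real.rpow_le_rpow_of_nonpos (lt_of_lt_of_le h0N hx.1) hxy (by linarith)
    have hint := hanti.sum_le_integral_Ico hn
    have hval : ∫ x in (N : ℝ)..(n : ℝ), x ^ (-(2 * t))
        = ((n : ℝ) ^ (-(2 * t) + 1) - (N : ℝ) ^ (-(2 * t) + 1)) / (-(2 * t) + 1) := by
      apply integral_rpow
      refine Or.inr ⟨by linarith, ?_⟩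
      exact Set.notMem_uIcc_of_lt h0N h0n
    have hNs : (N : ℝ) ^ (-(2 * t) + 1) ≤ m ^ (1 - 2 * t) := by
      have : -(2 * t) + 1 = 1 - 2 * t := by ring
      rw [this]
      exact Real.rpow_le_rpow_of_nonpos hm0 hmN (by linarith)
    have hns : 0 ≤ (n : ℝ) ^ (-(2 * t) + 1) := Real.rpow_nonneg h0n.le _
    have hintbound : ∫ x in (N : ℝ)..(n : ℝ), x ^ (-(2 * t)) ≤ lam * m / (2 * t - 1) := by
      rw [hval]
      have h1 : (-(2 * t) + 1) ≠ 0 := by intro h; linarith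
      have heq : ((n : ℝ) ^ (-(2 * t) + 1) - (N : ℝ) ^ (-(2 * t) + 1)) / (-(2 * t) + 1)
          = ((N : ℝ) ^ (-(2 * t) + 1) - (n : ℝ) ^ (-(2 * t) + 1)) / (2 * t - 1) := by
        rw [div_eq_div_iff h1 h2t.ne']
        ring
      rw [heq]
      gcongr
      linarith [hNs, hns, hms]
    have hsecond : ∑ i ∈ Finset.Ico N n, min 1 (((i : ℝ) + 1) ^ (-(2 * t)) / lam)
        ≤ m / (2 * t - 1) := by
      calc ∑ i ∈ Finset.Ico N n, min 1 (((i : ℝ) + 1) ^ (-(2 * t)) / lam)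
          ≤ ∑ i ∈ Finset.Ico N n, ((i : ℝ) + 1) ^ (-(2 * t)) / lam :=
            Finset.sum_le_sum fun i _ => min_le_right _ _
        _ = (∑ i ∈ Finset.Ico N n, ((i : ℝ) + 1) ^ (-(2 * t))) / lam := by
            rw [Finset.sum_div]
        _ ≤ (lam * m / (2 * t - 1)) / lam := by
            gcongr
            refine le_trans ?_ hintbound
            refine le_trans (le_of_eq ?_) hint
            apply Finset.sum_congr rfl
            intro i _
            push_cast
            ring_nf
        _ = m / (2 * t - 1) := by
            rw [mul_div_assoc, mul_div_cancel_left₀ _ hlam0.ne']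
    rw [hsplit]
    calc _ ≤ (N : ℝ) + m / (2 * t - 1) := add_le_add hfirst hsecond
      _ ≤ m + 1 + m / (2 * t - 1) := by linarith
      _ = (1 + 1 / (2 * t - 1)) * m + 1 := hfinal.symm

/-- polynomial eigenvalue decay: if the eigenvalues of `K`, listed in
nonincreasing order, satisfy `λᵢ ≤ n i^{-2t}` for `i = 1, …, n`, then
`Tr[K (K + nλI)⁻¹] ≤ (1 + 1/(2t − 1)) λ^{-1/(2t)} + 1`. -/
theorem dof_bound_polynomial_decay {n : ℕ} (hn : 0 < n) (t : ℝ) (ht : 1 ≤ t)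
    (lam : ℝ) (hlam0 : 0 < lam) (hlam1 : lam ≤ 1)
    (K : Matrix (Fin n) (Fin n) ℝ) (hK : K.PosSemidef)
    (σ : Equiv.Perm (Fin n)) (hanti : Antitone (hK.1.eigenvalues ∘ σ))
    (hdecay : ∀ i : Fin n, hK.1.eigenvalues (σ i) ≤ (n : ℝ) * ((i.1 + 1 : ℝ)) ^ (-(2 * t))) :
    Matrix.trace (K * (K + (↑n * lam) • (1 : Matrix (Fin n) (Fin n) ℝ))⁻¹)
      ≤ (1 + 1 / (2 * t - 1)) * lam ^ (-(1 / (2 * t))) + 1 := by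
  have hn0 : (0 : ℝ) < (n : ℝ) := by exact_mod_cast hn
  have hc : 0 < (n : ℝ) * lam := mul_pos hn0 hlam0
  rw [aux_trace hK hc]
  set μ := hK.1.eigenvalues with hμ
  have hre : ∑ i, μ i * (μ i + (n : ℝ) * lam)⁻¹
      = ∑ i, μ (σ i) * (μ (σ i) + (n : ℝ) * lam)⁻¹ :=
    (Equiv.sum_comp σ fun i => μ i * (μ i + (n : ℝ) * lam)⁻¹).symm
  rw [hre]
  have hstep : ∀ i : Fin n, μ (σ i) * (μ (σ i) + (n : ℝ) * lam)⁻¹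
      ≤ min 1 (((i.1 : ℝ) + 1) ^ (-(2 * t)) / lam) := by
    intro i
    have ha : 0 ≤ μ (σ i) := hK.eigenvalues_nonneg (σ i)
    have hac : 0 < μ (σ i) + (n : ℝ) * lam := add_pos_of_nonneg_of_pos ha hc
    rw [← div_eq_mul_inv]
    refine le_min ?_ ?_
    · exact div_le_one_of_le₀ (le_add_of_nonneg_right hc.le) hac.le
    · calc μ (σ i) / (μ (σ i) + (n : ℝ) * lam) ≤ μ (σ i) / ((n : ℝ) * lam) :=
            div_le_div_of_nonneg_left ha hc (le_add_of_nonneg_left ha)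
        _ ≤ ((n : ℝ) * ((i.1 : ℝ) + 1) ^ (-(2 * t))) / ((n : ℝ) * lam) := by
            gcongr
            exact hdecay i
        _ = ((i.1 : ℝ) + 1) ^ (-(2 * t)) / lam := mul_div_mul_left _ _ hn0.ne'
  calc ∑ i, μ (σ i) * (μ (σ i) + (n : ℝ) * lam)⁻¹
      ≤ ∑ i : Fin n, min 1 (((i.1 : ℝ) + 1) ^ (-(2 * t)) / lam) :=
        Finset.sum_le_sum fun i _ => hstep i
    _ = ∑ i ∈ Finset.range n, min 1 (((i : ℝ) + 1) ^ (-(2 * t)) / lam) :=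
        Fin.sum_univ_eq_sum_range (fun i => min 1 (((i : ℝ) + 1) ^ (-(2 * t)) / lam)) n
    _ ≤ (1 + 1 / (2 * t - 1)) * lam ^ (-(1 / (2 * t))) + 1 := aux_sum n t lam ht hlam0 hlam1
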